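/- arXiv:2104.14283 — 3 statements merged into one kernel-verified Lean document; each statement's English description precedes it below -/
import Mathlib

section
/- In the abstract scalarization setting, for any μ, μ' ≥ 0, the minimal Lagrangian values satisfy |f(x*_μ) - f(x*_{μ'})| ≤ max(μ, μ') · |g(x*_μ) - g(x*_{μ'})|. -/
/-- Quantitative monotonicity: the change in `f` along the minimizer curve is
controlled by `max(μ, μ')` times the change in `g`. -/
theorem stmt_1 {S : Type*} (f g : S → ℝ) (xs : ℝ → S)
    (hopt : ∀ μ : ℝ, 0 ≤ μ → ∀ y : S, f (xs μ) + μ * g (xs μ) ≤ f y + μ * g y)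
    (μ μ' : ℝ) (hμ : 0 ≤ μ) (hμ' : 0 ≤ μ') :
    |f (xs μ) - f (xs μ')| ≤ max μ μ' * |g (xs μ) - g (xs μ')| := by
  have h1 := hopt μ hμ (xs μ')
  have h2 := hopt μ' hμ' (xs μ)
  have hA := le_abs_self (g (xs μ) - g (xs μ'))
  have hB := neg_abs_le (g (xs μ) - g (xs μ'))
  have hm1 : μ ≤ max μ μ' := le_max_left _ _
  have hm2 : μ' ≤ max μ μ' := le_max_right _ _
  have habs : (0:ℝ) ≤ |g (xs μ) - g (xs μ')| := abs_nonneg _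
  rw [abs_le]
  constructor <;> nlinarith
end

section
/- Uncertainty principle (abstract form): let S be a set, f, g : S → ℝ≥0, and x* : [0,∞] → S a curve of Lagrangian minimizers such that (i) for all μ ∈ [0,∞) and all y ∈ S, f(x*_μ) + μ g(x*_μ) ≤ f(y) + μ g(y); (ii) g(x*_∞) = inf_{y∈S} g(y); (iii) μ ↦ g(x*_μ) is continuous on [0,∞] (so the range of g along the curve is an interval); (iv) μ ↦ f(x*_μ) is continuous with f(x*_∞) = lim_{μ→∞} f(x*_μ); and (v) the infimum h := inf_{μ∈[0,∞]} f(x*_μ) g(x*_μ) is attained. Then every x̂ ∈ S satisfies f(x̂) g(x̂) ≥ h. -/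
/-- Abstract uncertainty principle (Theorem 1): with a curve of Lagrangian
minimizers `xs : [0,∞) → S` extended by a limit point `xinf` (the point `x*_∞`),
every element of `S` satisfies the product lower bound `f x̂ · g x̂ ≥ h`, where
`h` is the attained infimum of the product along the curve. -/
theorem stmt_3 {S : Type*} (f g : S → ℝ) (xs : ℝ → S) (xinf : S)
    (hf : ∀ y : S, 0 ≤ f y) (hg : ∀ y : S, 0 ≤ g y)
    -- (i) Lagrangian optimality for every finite μ ≥ 0
    (hopt : ∀ μ : ℝ, 0 ≤ μ → ∀ y : S, f (xs μ) + μ * g (xs μ) ≤ f y + μ * g y)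
    -- (ii) g(x*_∞) minimizes g over S
    (hginf : ∀ y : S, g xinf ≤ g y)
    -- (iii) continuity of g along the curve on [0,∞], i.e. on [0,∞) and at ∞
    (hgcont : ContinuousOn (fun μ => g (xs μ)) (Set.Ici (0 : ℝ)))
    (hglim : Filter.Tendsto (fun μ => g (xs μ)) Filter.atTop (nhds (g xinf)))
    -- (iv) continuity of f along the curve on [0,∞], with f(x*_∞) the limit
    (hfcont : ContinuousOn (fun μ => f (xs μ)) (Set.Ici (0 : ℝ)))
    (hflim : Filter.Tendsto (fun μ => f (xs μ)) Filter.atTop (nhds (f xinf)))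
    -- (v) the infimum h of the product over [0,∞] is attained
    (h : ℝ)
    (hatt : (∃ μ : ℝ, 0 ≤ μ ∧ h = f (xs μ) * g (xs μ)) ∨ h = f xinf * g xinf)
    (hlb : (∀ μ : ℝ, 0 ≤ μ → h ≤ f (xs μ) * g (xs μ)) ∧ h ≤ f xinf * g xinf) :
    ∀ xhat : S, h ≤ f xhat * g xhat := by
  intro xhat
  rcases le_or_gt (g (xs 0)) (g xhat) with h0 | h0
  · have hf0 : f (xs 0) ≤ f xhat := by
      have := hopt 0 le_rfl xhat; simpa using this
    calc h ≤ f (xs 0) * g (xs 0) := hlb.1 0 le_rfl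
      _ ≤ f xhat * g xhat := mul_le_mul hf0 h0 (hg _) (hf _)
  · rcases eq_or_lt_of_le (hginf xhat) with heq | hlt
    · have hfle : ∀ μ : ℝ, 0 ≤ μ → f (xs μ) ≤ f xhat := by
        intro μ hμ
        have hle := hopt μ hμ xhat
        have : μ * g xhat ≤ μ * g (xs μ) := by
          apply mul_le_mul_of_nonneg_left _ hμ
          rw [← heq]; exact hginf _
        linarith
      have hfinf : f xinf ≤ f xhat :=
        le_of_tendsto hflim ((Filter.eventually_ge_atTop 0).mono hfle)
      calc h ≤ f xinf * g xinf := hlb.2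
        _ = f xinf * g xhat := by rw [heq]
        _ ≤ f xhat * g xhat := mul_le_mul_of_nonneg_right hfinf (hg _)
    · obtain ⟨μ₁, hμ₁0, hμ₁⟩ : ∃ μ₁, 0 ≤ μ₁ ∧ g (xs μ₁) < g xhat := by
        have := (hglim.eventually_lt_const hlt).and (Filter.eventually_ge_atTop 0)
        rcases this.exists with ⟨μ₁, h1, h2⟩
        exact ⟨μ₁, h2, h1⟩
      have hsub : Set.Icc (g (xs μ₁)) (g (xs 0)) ⊆
          (fun μ => g (xs μ)) '' Set.Icc 0 μ₁ :=
        intermediate_value_Icc' hμ₁0 (hgcont.mono (fun x hx => hx.1))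
      obtain ⟨μ, hμmem, hμeq⟩ := hsub ⟨hμ₁.le, h0.le⟩
      have hμ0 : 0 ≤ μ := hμmem.1
      have hfμ : f (xs μ) ≤ f xhat := by
        have := hopt μ hμ0 xhat
        simp only at hμeq
        rw [hμeq] at this; linarith
      calc h ≤ f (xs μ) * g (xs μ) := hlb.1 μ hμ0
        _ = f (xs μ) * g xhat := by rw [show g (xs μ) = g xhat from hμeq]
        _ ≤ f xhat * g xhat := mul_le_mul_of_nonneg_right hfμ (hg _)
end

section
/- Let Σ ⪰ 0 with largest eigenvalue at most ρ_max and smallest nonzero eigenvalue at least σ_min > 0, and let x(μ) = (I+2μΣ)⁻¹(a+μR) with limit x(∞). Then for all μ ≥ 0: |‖x(μ) − x(∞)‖²_Σ| ≤ max_i σᵢ/(1+2μσᵢ)² · ‖x(0) − x(∞)‖²₂ ≤ (1/(4μ²σ_min)) ‖x(0) − x(∞)‖²₂, so in particular ‖x(μ) − x(∞)‖²_Σ → 0 as μ → ∞ at rate O(1/μ²). -/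
open Matrix Filter

/-- Decay of the `Σ`-weighted quadratic form along the curve
`x(μ) = (I + 2μΣ)⁻¹(a + μR)`: the weighted norm `‖x(μ) − x(∞)‖²_Σ` is bounded
by `max_i σᵢ/(1+2μσᵢ)² · ‖x(0) − x(∞)‖²` and, for `μ > 0`, by
`‖x(0) − x(∞)‖²/(4μ²σ_min)`; in particular it tends to `0` as `μ → ∞`. -/
theorem stmt_18 (n r : ℕ) (hn : 0 < n) (hr : r ≤ n)
    (U : Matrix (Fin n) (Fin n) ℝ)
    (hU : U * Uᵀ = 1) (hU' : Uᵀ * U = 1)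
    (σ : Fin n → ℝ) (σmin ρmax : ℝ) (hσmin : 0 < σmin)
    (hσ : ∀ i : Fin n, (i : ℕ) < r → σmin ≤ σ i ∧ σ i ≤ ρmax)
    (hσzero : ∀ i : Fin n, ¬ (i : ℕ) < r → σ i = 0)
    (Sig Sigdag : Matrix (Fin n) (Fin n) ℝ)
    (hSig : Sig = U * Matrix.diagonal σ * Uᵀ)
    (hSigdag : Sigdag = U * Matrix.diagonal
        (fun i : Fin n => if (i : ℕ) < r then (σ i)⁻¹ else 0) * Uᵀ)
    (a R : Fin n → ℝ)
    (x : ℝ → Fin n → ℝ)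
    (hx : ∀ μ : ℝ, x μ = ((1 + (2 * μ) • Sig)⁻¹).mulVec (a + μ • R))
    (xinf : Fin n → ℝ)
    (hxinf : xinf = (1 / 2 : ℝ) • Sigdag.mulVec R +
        U.mulVec (fun i : Fin n => if (i : ℕ) < r then 0 else Uᵀ.mulVec a i)) :
    (∀ μ : ℝ, 0 ≤ μ →
      (x μ - xinf) ⬝ᵥ Sig.mulVec (x μ - xinf) ≤
        (⨆ i : Fin n, if (i : ℕ) < r then σ i / (1 + 2 * μ * σ i) ^ 2 else 0) *
          ((x 0 - xinf) ⬝ᵥ (x 0 - xinf))) ∧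
    (∀ μ : ℝ, 0 < μ →
      (x μ - xinf) ⬝ᵥ Sig.mulVec (x μ - xinf) ≤
        1 / (4 * μ ^ 2 * σmin) * ((x 0 - xinf) ⬝ᵥ (x 0 - xinf))) ∧
    Tendsto (fun μ : ℝ => (x μ - xinf) ⬝ᵥ Sig.mulVec (x μ - xinf))
      atTop (nhds 0) := by
  have hσnn : ∀ i, 0 ≤ σ i := by
    intro i
    by_cases h : (i : ℕ) < r
    · exact le_trans hσmin.le (hσ i h).1
    · rw [hσzero i h]
  have hpos : ∀ μ : ℝ, 0 ≤ μ → ∀ i, 0 < 1 + 2 * μ * σ i := by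
    intro μ hμ i
    have := mul_nonneg (mul_nonneg (by norm_num : (0:ℝ) ≤ 2) hμ) (hσnn i)
    linarith
  set b := Uᵀ.mulVec a with hb
  set c := Uᵀ.mulVec R with hc
  set g : ℝ → Fin n → ℝ := fun μ i =>
    (1 + 2 * μ * σ i)⁻¹ * (b i + μ * c i) -
      (if (i : ℕ) < r then c i / (2 * σ i) else b i) with hg
  -- conjugation lemma
  have key : ∀ (f : Fin n → ℝ) (v : Fin n → ℝ),
      (U * Matrix.diagonal f * Uᵀ) *ᵥ v = U *ᵥ fun i => f i * (Uᵀ *ᵥ v) i := by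
    intro f v
    have h : Matrix.diagonal f *ᵥ (Uᵀ *ᵥ v) = fun i => f i * (Uᵀ *ᵥ v) i := by
      funext i; exact Matrix.mulVec_diagonal f (Uᵀ *ᵥ v) i
    rw [← h, Matrix.mulVec_mulVec, Matrix.mulVec_mulVec]
  have hUtU : ∀ w : Fin n → ℝ, Uᵀ *ᵥ (U *ᵥ w) = w := by
    intro w; rw [Matrix.mulVec_mulVec, hU', Matrix.one_mulVec]
  have hortho : ∀ v w : Fin n → ℝ, (U *ᵥ v) ⬝ᵥ (U *ᵥ w) = v ⬝ᵥ w := by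
    intro v w
    rw [Matrix.dotProduct_mulVec, ← Matrix.mulVec_transpose, Matrix.mulVec_mulVec, hU',
      Matrix.one_mulVec]
  -- inverse formula
  have hinv : ∀ μ : ℝ, 0 ≤ μ →
      (1 + (2 * μ) • Sig)⁻¹ = U * Matrix.diagonal (fun i => (1 + 2 * μ * σ i)⁻¹) * Uᵀ := by
    intro μ hμ
    have h1 : (1 : Matrix (Fin n) (Fin n) ℝ) + (2 * μ) • Sig
        = U * Matrix.diagonal (fun i => 1 + 2 * μ * σ i) * Uᵀ := by
      have hd : Matrix.diagonal (fun i : Fin n => 1 + 2 * μ * σ i)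
          = 1 + Matrix.diagonal (fun i => 2 * μ * σ i) := by
        rw [← Matrix.diagonal_one, ← Matrix.diagonal_add]
      have hd2 : Matrix.diagonal (fun i : Fin n => 2 * μ * σ i)
          = (2 * μ) • Matrix.diagonal σ := by
        rw [← Matrix.diagonal_smul]
        congr 1
      rw [hd, hd2, Matrix.mul_add, Matrix.add_mul, Matrix.mul_one, hU, hSig,
        Matrix.mul_smul, Matrix.smul_mul]
    apply Matrix.inv_eq_right_inv
    rw [h1]
    simp only [Matrix.mul_assoc]
    rw [← Matrix.mul_assoc Uᵀ U, hU', Matrix.one_mul,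
      ← Matrix.mul_assoc (Matrix.diagonal _) (Matrix.diagonal _),
      Matrix.diagonal_mul_diagonal]
    have hone : (fun i => (1 + 2 * μ * σ i) * (1 + 2 * μ * σ i)⁻¹) = fun _ : Fin n => (1:ℝ) := by
      funext i; exact mul_inv_cancel₀ (hpos μ hμ i).ne'
    rw [hone, Matrix.diagonal_one, Matrix.one_mul, hU]
  -- difference formula
  have hdiff : ∀ μ : ℝ, 0 ≤ μ → x μ - xinf = U *ᵥ g μ := by
    intro μ hμ
    rw [hx, hinv μ hμ, hxinf, hSigdag, key, key]
    rw [← Matrix.mulVec_smul, ← Matrix.mulVec_add, ← Matrix.mulVec_sub]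
    refine congrArg (fun w => U *ᵥ w) ?_
    funext i
    have hUa : Uᵀ *ᵥ (a + μ • R) = b + μ • c := by
      rw [Matrix.mulVec_add, Matrix.mulVec_smul, hb, hc]
    rw [hUa]
    simp only [hg, ← hc, Pi.sub_apply, Pi.add_apply, Pi.smul_apply, smul_eq_mul]
    by_cases hi : (i : ℕ) < r
    · rw [if_pos hi, if_pos hi, if_pos hi]
      have hs : σ i ≠ 0 := (lt_of_lt_of_le hσmin (hσ i hi).1).ne'
      field_simp
      ring
    · rw [if_neg hi, if_neg hi, if_neg hi]
      ring
  -- quadratic form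
  have hform : ∀ μ : ℝ, 0 ≤ μ →
      (x μ - xinf) ⬝ᵥ Sig.mulVec (x μ - xinf) = ∑ i, σ i * g μ i ^ 2 := by
    intro μ hμ
    rw [hdiff μ hμ, hSig, key]
    have : (fun i => σ i * (Uᵀ *ᵥ (U *ᵥ g μ)) i) = fun i => σ i * g μ i := by
      rw [hUtU]
    rw [this, hortho]
    simp only [dotProduct]
    exact Finset.sum_congr rfl fun i _ => by ring
  have hC : (x 0 - xinf) ⬝ᵥ (x 0 - xinf) = ∑ i, g 0 i ^ 2 := by
    rw [hdiff 0 le_rfl, hortho]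
    simp only [dotProduct]
    exact Finset.sum_congr rfl fun i _ => by ring
  -- per-coordinate relation
  have hrel : ∀ μ : ℝ, 0 ≤ μ → ∀ i : Fin n,
      σ i * g μ i ^ 2 =
        (if (i : ℕ) < r then σ i / (1 + 2 * μ * σ i) ^ 2 else 0) * g 0 i ^ 2 := by
    intro μ hμ i
    by_cases hi : (i : ℕ) < r
    · have hs : 0 < σ i := lt_of_lt_of_le hσmin (hσ i hi).1
      have hne : (1 + 2 * μ * σ i) ≠ 0 := (hpos μ hμ i).ne'
      have hgrel : g μ i = g 0 i / (1 + 2 * μ * σ i) := by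
        simp only [hg, hi, if_pos]
        field_simp
        ring
      rw [hgrel, if_pos hi, div_pow]
      field_simp
    · rw [hσzero i hi, if_neg hi]
      ring
  have hsum : ∀ μ : ℝ, 0 ≤ μ →
      (x μ - xinf) ⬝ᵥ Sig.mulVec (x μ - xinf) =
        ∑ i : Fin n, (if (i : ℕ) < r then σ i / (1 + 2 * μ * σ i) ^ 2 else 0) * g 0 i ^ 2 := by
    intro μ hμ
    rw [hform μ hμ]
    exact Finset.sum_congr rfl fun i _ => hrel μ hμ i
  have hCnn : 0 ≤ (x 0 - xinf) ⬝ᵥ (x 0 - xinf) := by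
    rw [hC]; exact Finset.sum_nonneg fun i _ => sq_nonneg _
  have hnonneg : ∀ μ : ℝ, 0 ≤ μ → 0 ≤ (x μ - xinf) ⬝ᵥ Sig.mulVec (x μ - xinf) := by
    intro μ hμ
    rw [hform μ hμ]
    exact Finset.sum_nonneg fun i _ => mul_nonneg (hσnn i) (sq_nonneg _)
  -- part 1
  have part1 : ∀ μ : ℝ, 0 ≤ μ →
      (x μ - xinf) ⬝ᵥ Sig.mulVec (x μ - xinf) ≤
        (⨆ i : Fin n, if (i : ℕ) < r then σ i / (1 + 2 * μ * σ i) ^ 2 else 0) *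
          ((x 0 - xinf) ⬝ᵥ (x 0 - xinf)) := by
    intro μ hμ
    rw [hsum μ hμ, hC, Finset.mul_sum]
    apply Finset.sum_le_sum
    intro i _
    apply mul_le_mul_of_nonneg_right _ (sq_nonneg _)
    exact le_ciSup (f := fun i : Fin n => if (i : ℕ) < r then σ i / (1 + 2 * μ * σ i) ^ 2 else 0)
      (Set.Finite.bddAbove (Set.finite_range _)) i
  -- part 2
  have part2 : ∀ μ : ℝ, 0 < μ →
      (x μ - xinf) ⬝ᵥ Sig.mulVec (x μ - xinf) ≤
        1 / (4 * μ ^ 2 * σmin) * ((x 0 - xinf) ⬝ᵥ (x 0 - xinf)) := by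
    intro μ hμ
    have hb4 : 0 < 4 * μ ^ 2 * σmin := by positivity
    rw [hsum μ hμ.le, hC, Finset.mul_sum]
    apply Finset.sum_le_sum
    intro i _
    apply mul_le_mul_of_nonneg_right _ (sq_nonneg _)
    by_cases hi : (i : ℕ) < r
    · rw [if_pos hi]
      have hs : σmin ≤ σ i := (hσ i hi).1
      have hs0 : 0 < σ i := lt_of_lt_of_le hσmin hs
      rw [div_le_div_iff₀ (pow_pos (hpos μ hμ.le i) 2) hb4]
      nlinarith [sq_nonneg (1 + 2 * μ * σ i), mul_pos hμ hs0, sq_nonneg μ,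
        mul_pos (mul_pos hμ hμ) (mul_pos hs0 hs0)]
    · rw [if_neg hi]
      positivity
  refine ⟨part1, part2, ?_⟩
  have hub : Tendsto (fun μ : ℝ => 1 / (4 * μ ^ 2 * σmin) * ((x 0 - xinf) ⬝ᵥ (x 0 - xinf)))
      atTop (nhds 0) := by
    have h1 : Tendsto (fun μ : ℝ => μ ^ 2) atTop atTop := tendsto_pow_atTop (by norm_num)
    have h2 : Tendsto (fun μ : ℝ => (μ ^ 2)⁻¹) atTop (nhds 0) := h1.inv_tendsto_atTop
    have h3 := h2.const_mul ((4 * σmin)⁻¹ * ((x 0 - xinf) ⬝ᵥ (x 0 - xinf)))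
    rw [mul_zero] at h3
    convert h3 using 2 with μ
    rw [one_div, mul_inv, mul_inv]
    ring
  refine tendsto_of_tendsto_of_tendsto_of_le_of_le' tendsto_const_nhds hub ?_ ?_
  · filter_upwards [eventually_ge_atTop (0:ℝ)] with μ hμ
    exact hnonneg μ hμ
  · filter_upwards [eventually_gt_atTop (0:ℝ)] with μ hμ
    exact part2 μ hμ
end
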